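/- Suppose L is C² and there exists r ∈ ℝ with sup over all (m,λ) of λ_max(L_λλ) < r < inf over all (m,λ) of λ_min(L_mm). Then along any trajectory of the gradient descent-ascent dynamics, the Lyapunov function V(m, λ) = ½‖∇_m L‖² + ½‖∇_λ L‖² - r·L(m, λ) is non-increasing; moreover dV/dt ≤ -μ(‖∇_m L‖² + ‖∇_λ L‖²) for some μ > 0. -/

import Mathlib

open RealInnerProductSpace
open InnerProductSpace ContinuousLinearMap

noncomputable def rieszCLM (E : Type*) [NormedAddCommGroup E] [InnerProductSpace ℝ E]
    [CompleteSpace E] : (E →L[ℝ] ℝ) →L[ℝ] E :=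
  LinearMap.mkContinuous
    { toFun := fun φ => (toDual ℝ E).symm φ
      map_add' := fun φ ψ => by simp
      map_smul' := fun c φ => by
        simp [LinearIsometryEquiv.map_smulₛₗ, starRingEnd_apply, star_trivial] }
    1 (fun φ => by simp)

lemma inner_rieszCLM {E : Type*} [NormedAddCommGroup E] [InnerProductSpace ℝ E]
    [CompleteSpace E] (φ : E →L[ℝ] ℝ) (v : E) : ⟪rieszCLM E φ, v⟫ = φ v :=
  toDual_symm_apply

section Aux

variable {E K : Type*} [NormedAddCommGroup E] [InnerProductSpace ℝ E] [CompleteSpace E]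
  [NormedAddCommGroup K] [InnerProductSpace ℝ K] [CompleteSpace K]

lemma grad_fst (L : E × K → ℝ) (hL : Differentiable ℝ L) (p : E × K) :
    gradient (fun m' => L (m', p.2)) p.1 = rieszCLM E ((fderiv ℝ L p).comp (inl ℝ E K)) := by
  show (toDual ℝ E).symm _ = (toDual ℝ E).symm _
  congr 1
  have := ((hL p).hasFDerivAt.comp p.1 (hasFDerivAt_prodMk_left (𝕜 := ℝ) p.1 p.2))
  simpa [Function.comp_def] using this.fderiv

lemma grad_snd (L : E × K → ℝ) (hL : Differentiable ℝ L) (p : E × K) :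
    gradient (fun l' => L (p.1, l')) p.2 = rieszCLM K ((fderiv ℝ L p).comp (inr ℝ E K)) := by
  show (toDual ℝ K).symm _ = (toDual ℝ K).symm _
  congr 1
  have := ((hL p).hasFDerivAt.comp p.2 (hasFDerivAt_prodMk_right (𝕜 := ℝ) p.1 p.2))
  simpa [Function.comp_def] using this.fderiv

end Aux

section Aux2

set_option linter.unusedSectionVars false

variable {E K : Type*} [NormedAddCommGroup E] [InnerProductSpace ℝ E] [CompleteSpace E]
  [NormedAddCommGroup K] [InnerProductSpace ℝ K] [CompleteSpace K]
  (L : E × K → ℝ)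

lemma inner_fderiv_grad_fst (hL : ContDiff ℝ 2 L) (p : E × K) (v : E) :
    ⟪v, fderiv ℝ (fun m' => gradient (fun m'' => L (m'', p.2)) m') p.1 v⟫
      = fderiv ℝ (fderiv ℝ L) p (v, 0) (v, 0) := by
  have hdiff : Differentiable ℝ L := hL.differentiable two_ne_zero
  have hf'' : HasFDerivAt (fderiv ℝ L) (fderiv ℝ (fderiv ℝ L) p) p :=
    (((hL.fderiv_right (m := 1) one_add_one_eq_two.le).differentiable one_ne_zero) p).hasFDerivAt
  set C : (E × K →L[ℝ] ℝ) →L[ℝ] E :=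
    (rieszCLM E).comp ((compL ℝ E (E × K) ℝ).flip (inl ℝ E K)) with hC
  have hfun : (fun m' => gradient (fun m'' => L (m'', p.2)) m')
      = fun m' => C (fderiv ℝ L (m', p.2)) := by
    funext m'
    simpa [hC] using grad_fst L hdiff (m', p.2)
  have h1 : HasFDerivAt (fun m' : E => (m', p.2)) (inl ℝ E K) p.1 :=
    hasFDerivAt_prodMk_left _ _
  have h2 : HasFDerivAt (fun m' : E => fderiv ℝ L (m', p.2))
      ((fderiv ℝ (fderiv ℝ L) p).comp (inl ℝ E K)) p.1 := HasFDerivAt.comp (x := p.1) (g := fderiv ℝ L) hf'' h1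
  have hF : HasFDerivAt (fun m' => C (fderiv ℝ L (m', p.2)))
      (C.comp ((fderiv ℝ (fderiv ℝ L) p).comp (inl ℝ E K))) p.1 := by
    exact HasFDerivAt.comp (x := p.1) (g := ⇑C) (C.hasFDerivAt (x := fderiv ℝ L (p.1, p.2))) (HasFDerivAt.comp (x := p.1) (g := fderiv ℝ L) hf'' h1)
  rw [hfun, hF.fderiv]
  simp only [hC, coe_comp', Function.comp_apply, flip_apply, compL_apply]
  rw [real_inner_comm, inner_rieszCLM]
  simp

lemma inner_fderiv_grad_snd (hL : ContDiff ℝ 2 L) (p : E × K) (v : K) :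
    ⟪v, fderiv ℝ (fun l' => gradient (fun l'' => L (p.1, l'')) l') p.2 v⟫
      = fderiv ℝ (fderiv ℝ L) p (0, v) (0, v) := by
  have hdiff : Differentiable ℝ L := hL.differentiable two_ne_zero
  have hf'' : HasFDerivAt (fderiv ℝ L) (fderiv ℝ (fderiv ℝ L) p) p :=
    (((hL.fderiv_right (m := 1) one_add_one_eq_two.le).differentiable one_ne_zero) p).hasFDerivAt
  set C : (E × K →L[ℝ] ℝ) →L[ℝ] K :=
    (rieszCLM K).comp ((compL ℝ K (E × K) ℝ).flip (inr ℝ E K)) with hC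
  have hfun : (fun l' => gradient (fun l'' => L (p.1, l'')) l')
      = fun l' => C (fderiv ℝ L (p.1, l')) := by
    funext l'
    simpa [hC] using grad_snd L hdiff (p.1, l')
  have h1 : HasFDerivAt (fun l' : K => (p.1, l')) (inr ℝ E K) p.2 :=
    hasFDerivAt_prodMk_right _ _
  have h2 : HasFDerivAt (fun l' : K => fderiv ℝ L (p.1, l'))
      ((fderiv ℝ (fderiv ℝ L) p).comp (inr ℝ E K)) p.2 := HasFDerivAt.comp (x := p.2) (g := fderiv ℝ L) hf'' h1
  have hF : HasFDerivAt (fun l' => C (fderiv ℝ L (p.1, l')))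
      (C.comp ((fderiv ℝ (fderiv ℝ L) p).comp (inr ℝ E K))) p.2 := by
    exact HasFDerivAt.comp (x := p.2) (g := ⇑C) (C.hasFDerivAt (x := fderiv ℝ L (p.1, p.2))) (HasFDerivAt.comp (x := p.2) (g := fderiv ℝ L) hf'' h1)
  rw [hfun, hF.fderiv]
  simp only [hC, coe_comp', Function.comp_apply, flip_apply, compL_apply]
  rw [real_inner_comm, inner_rieszCLM]
  simp

end Aux2

section Aux3

set_option linter.unusedSectionVars false

variable {E K : Type*} [NormedAddCommGroup E] [InnerProductSpace ℝ E] [CompleteSpace E]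
  [NormedAddCommGroup K] [InnerProductSpace ℝ K] [CompleteSpace K]
  (L : E × K → ℝ)

lemma hasDerivAt_grad_traj_fst (hL : ContDiff ℝ 2 L) {m : ℝ → E} {l : ℝ → K} {t : ℝ}
    {u : E} {w : K} (hm : HasDerivAt m u t) (hl : HasDerivAt l w t) :
    HasDerivAt (fun s => gradient (fun x => L (x, l s)) (m s))
      (rieszCLM E ((fderiv ℝ (fderiv ℝ L) (m t, l t) (u, w)).comp (inl ℝ E K))) t := by
  have hdiff : Differentiable ℝ L := hL.differentiable two_ne_zero
  have hf'' : HasFDerivAt (fderiv ℝ L) (fderiv ℝ (fderiv ℝ L) (m t, l t)) (m t, l t) :=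
    (((hL.fderiv_right (m := 1) one_add_one_eq_two.le).differentiable one_ne_zero) _).hasFDerivAt
  set C : (E × K →L[ℝ] ℝ) →L[ℝ] E :=
    (rieszCLM E).comp ((compL ℝ E (E × K) ℝ).flip (inl ℝ E K)) with hC
  have hfun : (fun s => gradient (fun x => L (x, l s)) (m s))
      = fun s => C (fderiv ℝ L (m s, l s)) := by
    funext s; simpa [hC] using grad_fst L hdiff (m s, l s)
  have h2 : HasDerivAt (fun s => fderiv ℝ L (m s, l s))
      (fderiv ℝ (fderiv ℝ L) (m t, l t) (u, w)) t :=
    HasFDerivAt.comp_hasDerivAt (x := t) (l := fderiv ℝ L) hf'' (hm.prodMk hl)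
  have h3 := HasFDerivAt.comp_hasDerivAt (x := t) (l := ⇑C) (C.hasFDerivAt (x := fderiv ℝ L (m t, l t))) h2
  rw [hfun]
  simpa [hC, Function.comp_def] using h3

lemma hasDerivAt_grad_traj_snd (hL : ContDiff ℝ 2 L) {m : ℝ → E} {l : ℝ → K} {t : ℝ}
    {u : E} {w : K} (hm : HasDerivAt m u t) (hl : HasDerivAt l w t) :
    HasDerivAt (fun s => gradient (fun y => L (m s, y)) (l s))
      (rieszCLM K ((fderiv ℝ (fderiv ℝ L) (m t, l t) (u, w)).comp (inr ℝ E K))) t := by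
  have hdiff : Differentiable ℝ L := hL.differentiable two_ne_zero
  have hf'' : HasFDerivAt (fderiv ℝ L) (fderiv ℝ (fderiv ℝ L) (m t, l t)) (m t, l t) :=
    (((hL.fderiv_right (m := 1) one_add_one_eq_two.le).differentiable one_ne_zero) _).hasFDerivAt
  set C : (E × K →L[ℝ] ℝ) →L[ℝ] K :=
    (rieszCLM K).comp ((compL ℝ K (E × K) ℝ).flip (inr ℝ E K)) with hC
  have hfun : (fun s => gradient (fun y => L (m s, y)) (l s))
      = fun s => C (fderiv ℝ L (m s, l s)) := by
    funext s; simpa [hC] using grad_snd L hdiff (m s, l s)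
  have h2 : HasDerivAt (fun s => fderiv ℝ L (m s, l s))
      (fderiv ℝ (fderiv ℝ L) (m t, l t) (u, w)) t :=
    HasFDerivAt.comp_hasDerivAt (x := t) (l := fderiv ℝ L) hf'' (hm.prodMk hl)
  have h3 := HasFDerivAt.comp_hasDerivAt (x := t) (l := ⇑C) (C.hasFDerivAt (x := fderiv ℝ L (m t, l t))) h2
  rw [hfun]
  simpa [hC, Function.comp_def] using h3

end Aux3

section Aux4

set_option linter.unusedSectionVars false
set_option maxHeartbeats 1000000

variable {E K : Type*} [NormedAddCommGroup E] [InnerProductSpace ℝ E] [CompleteSpace E]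
  [NormedAddCommGroup K] [InnerProductSpace ℝ K] [CompleteSpace K]
  (L : E × K → ℝ)

lemma lyap_hasDerivAt (hL : ContDiff ℝ 2 L) (r : ℝ) (m : ℝ → E) (l : ℝ → K)
    (hm : ∀ t, HasDerivAt m (-(gradient (fun m' => L (m', l t)) (m t))) t)
    (hl : ∀ t, HasDerivAt l (gradient (fun l' => L (m t, l')) (l t)) t) (t : ℝ) :
    HasDerivAt (fun s =>
        (1 / 2) * ‖gradient (fun m' => L (m', l s)) (m s)‖ ^ 2
          + (1 / 2) * ‖gradient (fun l' => L (m s, l')) (l s)‖ ^ 2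
          - r * L (m s, l s))
      (-(fderiv ℝ (fderiv ℝ L) (m t, l t)
            (gradient (fun m' => L (m', l t)) (m t), 0)
            (gradient (fun m' => L (m', l t)) (m t), 0))
        + fderiv ℝ (fderiv ℝ L) (m t, l t)
            (0, gradient (fun l' => L (m t, l')) (l t))
            (0, gradient (fun l' => L (m t, l')) (l t))
        + r * ‖gradient (fun m' => L (m', l t)) (m t)‖ ^ 2
        - r * ‖gradient (fun l' => L (m t, l')) (l t)‖ ^ 2) t := by
  have hdiff : Differentiable ℝ L := hL.differentiable two_ne_zero
  have hf'' : HasFDerivAt (fderiv ℝ L) (fderiv ℝ (fderiv ℝ L) (m t, l t)) (m t, l t) :=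
    (((hL.fderiv_right (m := 1) one_add_one_eq_two.le).differentiable one_ne_zero) _).hasFDerivAt
  set gm := gradient (fun m' => L (m', l t)) (m t) with hgm_def
  set gl := gradient (fun l' => L (m t, l')) (l t) with hgl_def
  set B := fderiv ℝ (fderiv ℝ L) (m t, l t) with hB
  -- derivatives of the two gradient curves
  have hGm : HasDerivAt (fun s => gradient (fun x => L (x, l s)) (m s))
      (rieszCLM E ((B (-gm, gl)).comp (inl ℝ E K))) t :=
    hasDerivAt_grad_traj_fst L hL (hm t) (hl t)
  have hGl : HasDerivAt (fun s => gradient (fun y => L (m s, y)) (l s))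
      (rieszCLM K ((B (-gm, gl)).comp (inr ℝ E K))) t :=
    hasDerivAt_grad_traj_snd L hL (hm t) (hl t)
  -- derivative of squared norms
  have hNm : HasDerivAt (fun s => ‖gradient (fun x => L (x, l s)) (m s)‖ ^ 2)
      (⟪gm, rieszCLM E ((B (-gm, gl)).comp (inl ℝ E K))⟫
        + ⟪rieszCLM E ((B (-gm, gl)).comp (inl ℝ E K)), gm⟫) t := by
    have heq : (fun s => ‖gradient (fun x => L (x, l s)) (m s)‖ ^ 2)
        = fun s => ⟪gradient (fun x => L (x, l s)) (m s),
            gradient (fun x => L (x, l s)) (m s)⟫ := by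
      funext s; exact (real_inner_self_eq_norm_sq _).symm
    rw [heq]
    exact hGm.inner ℝ hGm
  have hNl : HasDerivAt (fun s => ‖gradient (fun y => L (m s, y)) (l s)‖ ^ 2)
      (⟪gl, rieszCLM K ((B (-gm, gl)).comp (inr ℝ E K))⟫
        + ⟪rieszCLM K ((B (-gm, gl)).comp (inr ℝ E K)), gl⟫) t := by
    have heq : (fun s => ‖gradient (fun y => L (m s, y)) (l s)‖ ^ 2)
        = fun s => ⟪gradient (fun y => L (m s, y)) (l s),
            gradient (fun y => L (m s, y)) (l s)⟫ := by
      funext s; exact (real_inner_self_eq_norm_sq _).symm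
    rw [heq]
    exact hGl.inner ℝ hGl
  have hLt : HasDerivAt (fun s => L (m s, l s)) (fderiv ℝ L (m t, l t) (-gm, gl)) t :=
    (hdiff (m t, l t)).hasFDerivAt.comp_hasDerivAt t ((hm t).prodMk (hl t))
  have hV := ((hNm.const_mul ((1:ℝ)/2)).add (hNl.const_mul ((1:ℝ)/2))).sub (hLt.const_mul r)
  refine hV.congr_deriv ?_
  -- now prove the value equality
  have hsplit : ((-gm, gl) : E × K) = -(gm, (0:K)) + ((0:E), gl) := by
    simp [Prod.ext_iff]
  have hBsplit : ∀ x : E × K, B (-gm, gl) x = -(B (gm, 0) x) + B (0, gl) x := by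
    intro x
    rw [hsplit, map_add, map_neg, ContinuousLinearMap.add_apply,
      ContinuousLinearMap.neg_apply]
  have hsym : B (0, gl) (gm, 0) = B (gm, 0) (0, gl) :=
    second_derivative_symmetric (fun y => (hdiff y).hasFDerivAt) hf'' _ _
  have e1 : ⟪rieszCLM E ((B (-gm, gl)).comp (inl ℝ E K)), gm⟫ = B (-gm, gl) (gm, 0) := by
    rw [inner_rieszCLM]; simp
  have e2 : ⟪rieszCLM K ((B (-gm, gl)).comp (inr ℝ E K)), gl⟫ = B (-gm, gl) (0, gl) := by
    rw [inner_rieszCLM]; simp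
  have e1' : ⟪gm, rieszCLM E ((B (-gm, gl)).comp (inl ℝ E K))⟫ = B (-gm, gl) (gm, 0) := by
    rw [real_inner_comm]; exact e1
  have e2' : ⟪gl, rieszCLM K ((B (-gm, gl)).comp (inr ℝ E K))⟫ = B (-gm, gl) (0, gl) := by
    rw [real_inner_comm]; exact e2
  -- first-derivative evaluations
  have hg1 : gm = rieszCLM E ((fderiv ℝ L (m t, l t)).comp (inl ℝ E K)) :=
    grad_fst L hdiff (m t, l t)
  have hg2 : gl = rieszCLM K ((fderiv ℝ L (m t, l t)).comp (inr ℝ E K)) :=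
    grad_snd L hdiff (m t, l t)
  have f1 : fderiv ℝ L (m t, l t) (gm, 0) = ‖gm‖ ^ 2 :=
    calc fderiv ℝ L (m t, l t) (gm, 0)
        = ((fderiv ℝ L (m t, l t)).comp (inl ℝ E K)) gm := by simp
      _ = ⟪rieszCLM E ((fderiv ℝ L (m t, l t)).comp (inl ℝ E K)), gm⟫ :=
          (inner_rieszCLM _ _).symm
      _ = ⟪gm, gm⟫ := by rw [← hg1]
      _ = ‖gm‖ ^ 2 := real_inner_self_eq_norm_sq _
  have f2 : fderiv ℝ L (m t, l t) (0, gl) = ‖gl‖ ^ 2 :=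
    calc fderiv ℝ L (m t, l t) (0, gl)
        = ((fderiv ℝ L (m t, l t)).comp (inr ℝ E K)) gl := by simp
      _ = ⟪rieszCLM K ((fderiv ℝ L (m t, l t)).comp (inr ℝ E K)), gl⟫ :=
          (inner_rieszCLM _ _).symm
      _ = ⟪gl, gl⟫ := by rw [← hg2]
      _ = ‖gl‖ ^ 2 := real_inner_self_eq_norm_sq _
  have fsplit : fderiv ℝ L (m t, l t) (-gm, gl) = -‖gm‖ ^ 2 + ‖gl‖ ^ 2 := by
    rw [hsplit, map_add, map_neg, f1, f2]
  rw [e1, e1', e2, e2', fsplit, hBsplit ((gm, 0) : E × K), hBsplit ((0 : E), gl), hsym]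
  ring
end Aux4

/-- If `sup λ_max(L_λλ) < r < inf λ_min(L_mm)` (expressed via uniform quadratic-form
bounds), then along any trajectory of the gradient descent-ascent dynamics the Lyapunov
function `V = ½‖∇_m L‖² + ½‖∇_λ L‖² - r L` is non-increasing, and moreover
`dV/dt ≤ -μ(‖∇_m L‖² + ‖∇_λ L‖²)` for some `μ > 0`. -/
theorem lyapunov_decreasing_under_gap {n k : ℕ}
    (L : EuclideanSpace ℝ (Fin n) × EuclideanSpace ℝ (Fin k) → ℝ)
    (hL : ContDiff ℝ 2 L) (r a b : ℝ) (hab : a < r) (hrb : r < b)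
    (hupper : ∀ m l (v : EuclideanSpace ℝ (Fin k)),
      ⟪v, fderiv ℝ (fun l' => gradient (fun l'' => L (m, l'')) l') l v⟫ ≤ a * ‖v‖ ^ 2)
    (hlower : ∀ m l (v : EuclideanSpace ℝ (Fin n)),
      b * ‖v‖ ^ 2 ≤ ⟪v, fderiv ℝ (fun m' => gradient (fun m'' => L (m'', l)) m') m v⟫)
    (m : ℝ → EuclideanSpace ℝ (Fin n)) (l : ℝ → EuclideanSpace ℝ (Fin k))
    (hm : ∀ t, HasDerivAt m (-(gradient (fun m' => L (m', l t)) (m t))) t)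
    (hl : ∀ t, HasDerivAt l (gradient (fun l' => L (m t, l')) (l t)) t) :
    Antitone (fun s =>
        (1 / 2) * ‖gradient (fun m' => L (m', l s)) (m s)‖ ^ 2
          + (1 / 2) * ‖gradient (fun l' => L (m s, l')) (l s)‖ ^ 2
          - r * L (m s, l s)) ∧
    ∃ μ : ℝ, 0 < μ ∧ ∀ t : ℝ,
      deriv (fun s =>
        (1 / 2) * ‖gradient (fun m' => L (m', l s)) (m s)‖ ^ 2
          + (1 / 2) * ‖gradient (fun l' => L (m s, l')) (l s)‖ ^ 2
          - r * L (m s, l s)) t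
      ≤ -μ * (‖gradient (fun m' => L (m', l t)) (m t)‖ ^ 2
          + ‖gradient (fun l' => L (m t, l')) (l t)‖ ^ 2) := by
  have hupper' : ∀ (p : EuclideanSpace ℝ (Fin n) × EuclideanSpace ℝ (Fin k)) v,
      fderiv ℝ (fderiv ℝ L) p (0, v) (0, v) ≤ a * ‖v‖ ^ 2 := by
    intro p v
    rw [← inner_fderiv_grad_snd L hL p v]
    exact hupper p.1 p.2 v
  have hlower' : ∀ (p : EuclideanSpace ℝ (Fin n) × EuclideanSpace ℝ (Fin k)) v,
      b * ‖v‖ ^ 2 ≤ fderiv ℝ (fderiv ℝ L) p (v, 0) (v, 0) := by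
    intro p v
    rw [← inner_fderiv_grad_fst L hL p v]
    exact hlower p.1 p.2 v
  set μ := min (b - r) (r - a) with hμ
  have hμpos : 0 < μ := lt_min (by linarith) (by linarith)
  have hVd := lyap_hasDerivAt L hL r m l hm hl
  have hbound : ∀ t, (-(fderiv ℝ (fderiv ℝ L) (m t, l t)
            (gradient (fun m' => L (m', l t)) (m t), 0)
            (gradient (fun m' => L (m', l t)) (m t), 0))
        + fderiv ℝ (fderiv ℝ L) (m t, l t)
            (0, gradient (fun l' => L (m t, l')) (l t))
            (0, gradient (fun l' => L (m t, l')) (l t))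
        + r * ‖gradient (fun m' => L (m', l t)) (m t)‖ ^ 2
        - r * ‖gradient (fun l' => L (m t, l')) (l t)‖ ^ 2)
      ≤ -μ * (‖gradient (fun m' => L (m', l t)) (m t)‖ ^ 2
          + ‖gradient (fun l' => L (m t, l')) (l t)‖ ^ 2) := by
    intro t
    have h1 := hlower' (m t, l t) (gradient (fun m' => L (m', l t)) (m t))
    have h2 := hupper' (m t, l t) (gradient (fun l' => L (m t, l')) (l t))
    have hm1 : μ ≤ b - r := min_le_left _ _
    have hm2 : μ ≤ r - a := min_le_right _ _
    nlinarith [sq_nonneg ‖gradient (fun m' => L (m', l t)) (m t)‖,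
      sq_nonneg ‖gradient (fun l' => L (m t, l')) (l t)‖]
  constructor
  · apply antitone_of_deriv_nonpos
    · exact fun t => (hVd t).differentiableAt
    · intro t
      rw [(hVd t).deriv]
      have := hbound t
      nlinarith [sq_nonneg ‖gradient (fun m' => L (m', l t)) (m t)‖,
        sq_nonneg ‖gradient (fun l' => L (m t, l')) (l t)‖]
  · exact ⟨μ, hμpos, fun t => by rw [(hVd t).deriv]; exact hbound t⟩
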